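/- Let α ∈ [5π/8, 2π/3] and define the diagonal operator ρ on H_3^{⊗4} with entry at position (j_1,...,j_4) equal to (k_0! k_1! k_2!/4!)·p_{k_0,k_1,k_2}, where k_i counts occurrences of i, and p_{4,0,0}=p_{0,0,4}=p_{0,4,0}=1, p_{0,2,2}=p_{2,2,0}=2, p_{0,1,3}=p_{3,1,0}=p_{0,3,1}=p_{1,3,0}=−2 cos α, p_{1,1,2}=p_{2,1,1}=2 cos 3α, p_{2,0,2}=−2 cos 4α, and all other p's are 0. Then ρ is a nonzero positive semidefinite operator orthogonal (in Hilbert-Schmidt inner product) to every B_1⊗B_2⊗B_3⊗B_4 with B_i ∈ {A_1, A_2}, where A_1 = diag(1, e^{iα}, 0) and A_2 = diag(0, 1, e^{iα}). -/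

import Mathlib

open Matrix
open scoped ComplexOrder

/-- The `N`-fold tensor (Kronecker) power: the tensor product `A 0 ⊗ ⋯ ⊗ A (N-1)`
realized as a matrix indexed by `Fin N → Fin d`. -/
noncomputable def tensorProd {d N : ℕ} (A : Fin N → Matrix (Fin d) (Fin d) ℂ) :
    Matrix (Fin N → Fin d) (Fin N → Fin d) ℂ :=
  fun j k => ∏ i, A i (j i) (k i)

/-- Number of occurrences of the value `i` in the index tuple `j`. -/
def occCount {N : ℕ} (j : Fin N → Fin 3) (i : Fin 3) : ℕ :=
  (Finset.univ.filter fun t => j t = i).card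

/-- The coefficients `p_{k₀,k₁,k₂}` for `N = 4`. -/
noncomputable def p4 (α : ℝ) : ℕ → ℕ → ℕ → ℝ
  | 4, 0, 0 => 1
  | 0, 0, 4 => 1
  | 0, 4, 0 => 1
  | 0, 2, 2 => 2
  | 2, 2, 0 => 2
  | 0, 1, 3 => -2 * Real.cos α
  | 3, 1, 0 => -2 * Real.cos α
  | 0, 3, 1 => -2 * Real.cos α
  | 1, 3, 0 => -2 * Real.cos α
  | 1, 1, 2 => 2 * Real.cos (3 * α)
  | 2, 1, 1 => 2 * Real.cos (3 * α)
  | 2, 0, 2 => -2 * Real.cos (4 * α)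
  | _, _, _ => 0

section Aux

variable (α : ℝ)

lemma p400' : p4 α 4 0 0 = 1 := rfl
lemma p004' : p4 α 0 0 4 = 1 := rfl
lemma p040' : p4 α 0 4 0 = 1 := rfl
lemma p022' : p4 α 0 2 2 = 2 := rfl
lemma p220' : p4 α 2 2 0 = 2 := rfl
lemma p013' : p4 α 0 1 3 = -2 * Real.cos α := rfl
lemma p310' : p4 α 3 1 0 = -2 * Real.cos α := rfl
lemma p031' : p4 α 0 3 1 = -2 * Real.cos α := rfl
lemma p130' : p4 α 1 3 0 = -2 * Real.cos α := rfl
lemma p112' : p4 α 1 1 2 = 2 * Real.cos (3 * α) := rfl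
lemma p211' : p4 α 2 1 1 = 2 * Real.cos (3 * α) := rfl
lemma p202' : p4 α 2 0 2 = -2 * Real.cos (4 * α) := rfl
lemma p103' : p4 α 1 0 3 = 0 := rfl
lemma p301' : p4 α 3 0 1 = 0 := rfl
lemma p121' : p4 α 1 2 1 = 0 := rfl

lemma p4_nonneg' (h1 : Real.cos α ≤ 0) (h3 : 0 ≤ Real.cos (3 * α))
    (h4 : Real.cos (4 * α) ≤ 0) (k0 k1 k2 : ℕ)
    (hk0 : k0 ≤ 4) (hk1 : k1 ≤ 4) (hk2 : k2 ≤ 4) : 0 ≤ p4 α k0 k1 k2 := by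
  interval_cases k0 <;> interval_cases k1 <;> interval_cases k2 <;>
    first
      | exact le_of_eq rfl
      | exact zero_le_one
      | exact zero_le_two
      | exact (by linarith : (0:ℝ) ≤ -2 * Real.cos α)
      | exact (by linarith : (0:ℝ) ≤ 2 * Real.cos (3 * α))
      | exact (by linarith : (0:ℝ) ≤ -2 * Real.cos (4 * α))

end Aux

def pi4equiv' : (Fin 3 × Fin 3 × Fin 3 × Fin 3) ≃ (Fin 4 → Fin 3) where
  toFun x := ![x.1, x.2.1, x.2.2.1, x.2.2.2]
  invFun j := (j 0, j 1, j 2, j 3)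
  left_inv x := rfl
  right_inv j := by funext i; fin_cases i <;> rfl

lemma sum_pi4' (f : (Fin 4 → Fin 3) → ℂ) :
    ∑ j, f j = ∑ a : Fin 3, ∑ b : Fin 3, ∑ c : Fin 3, ∑ d : Fin 3, f ![a,b,c,d] := by
  rw [← pi4equiv'.sum_comp f]
  simp [pi4equiv', Fintype.sum_prod_type]
  rfl

lemma trace_diag' (T : Matrix (Fin 4 → Fin 3) (Fin 4 → Fin 3) ℂ)
    (d : (Fin 4 → Fin 3) → ℂ) :
    (Tᴴ * Matrix.diagonal d).trace = ∑ j, (starRingEnd ℂ) (T j j) * d j := by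
  simp [Matrix.trace, Matrix.mul_diagonal, Matrix.conjTranspose_apply, Matrix.diag]

lemma tp_diag' (B : Fin 4 → Matrix (Fin 3) (Fin 3) ℂ) (a b c d : Fin 3) :
    tensorProd B ![a,b,c,d] ![a,b,c,d] = B 0 a a * B 1 b b * B 2 c c * B 3 d d := by
  simp [tensorProd, Fin.prod_univ_four]

lemma occ4' (a b c d i : Fin 3) : occCount ![a,b,c,d] i =
    (if a = i then 1 else 0) + (if b = i then 1 else 0) + (if c = i then 1 else 0)
      + (if d = i then 1 else 0) := by
  rw [occCount, Finset.card_filter, Fin.sum_univ_four]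
  norm_num [Matrix.cons_val_zero, Matrix.cons_val_one, Matrix.head_cons]
  rfl

set_option maxHeartbeats 4000000 in
/-- for `α ∈ [5π/8, 2π/3]`, the explicit diagonal operator `ρ` on
`H_3^{⊗4}` with entries `(k₀! k₁! k₂!/4!) p_{k₀,k₁,k₂}` is a nonzero positive
semidefinite operator Hilbert-Schmidt orthogonal to every `B₁ ⊗ B₂ ⊗ B₃ ⊗ B₄`
with `B_i ∈ {A_1, A_2}`. -/
theorem explicit_solution_four_copies (α : ℝ)
    (hα : α ∈ Set.Icc (5 * Real.pi / 8) (2 * Real.pi / 3))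
    (A₁ A₂ : Matrix (Fin 3) (Fin 3) ℂ)
    (hA₁ : A₁ = Matrix.diagonal ![1, Complex.exp (α * Complex.I), 0])
    (hA₂ : A₂ = Matrix.diagonal ![0, 1, Complex.exp (α * Complex.I)])
    (ρ : Matrix (Fin 4 → Fin 3) (Fin 4 → Fin 3) ℂ)
    (hρ : ρ = Matrix.diagonal fun j =>
      (((Nat.factorial (occCount j 0) * Nat.factorial (occCount j 1) *
          Nat.factorial (occCount j 2) : ℝ) / (Nat.factorial 4 : ℝ)) *
        p4 α (occCount j 0) (occCount j 1) (occCount j 2) : ℂ)) :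
    ρ.PosSemidef ∧ ρ ≠ 0 ∧
      ∀ B : Fin 4 → Matrix (Fin 3) (Fin 3) ℂ,
        (∀ t, B t = A₁ ∨ B t = A₂) → ((tensorProd B)ᴴ * ρ).trace = 0 := by
  obtain ⟨hαl, hαu⟩ := hα
  have hp := Real.pi_pos
  have h1 : Real.cos α ≤ 0 := by
    apply Real.cos_nonpos_of_pi_div_two_le_of_le <;> nlinarith
  have h3 : 0 ≤ Real.cos (3 * α) := by
    have h : Real.cos (3 * α) = Real.cos (3 * α - 2 * Real.pi) :=
      (Real.cos_sub_two_pi _).symm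
    rw [h]
    apply Real.cos_nonneg_of_mem_Icc
    constructor <;> [nlinarith; nlinarith]
  have h4 : Real.cos (4 * α) ≤ 0 := by
    have h : Real.cos (4 * α) = Real.cos (4 * α - 2 * Real.pi) :=
      (Real.cos_sub_two_pi _).symm
    rw [h]
    apply Real.cos_nonpos_of_pi_div_two_le_of_le <;> nlinarith
  subst hA₁ hA₂ hρ
  refine ⟨?_, ?_, ?_⟩
  · rw [Matrix.posSemidef_diagonal_iff]
    intro j
    have hr : (0:ℝ) ≤ ((Nat.factorial (occCount j 0) * Nat.factorial (occCount j 1) *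
          Nat.factorial (occCount j 2) : ℝ) / (Nat.factorial 4 : ℝ)) *
        p4 α (occCount j 0) (occCount j 1) (occCount j 2) :=
      mul_nonneg (div_nonneg (by positivity) (by positivity))
        (p4_nonneg' α h1 h3 h4 _ _ _
          ((Finset.card_filter_le _ _).trans (by simp))
          ((Finset.card_filter_le _ _).trans (by simp))
          ((Finset.card_filter_le _ _).trans (by simp)))
    exact_mod_cast hr
  · intro h
    have h0 := congrFun (congrFun h (fun _ => 0)) (fun _ => 0)
    have e0 : occCount (fun _ : Fin 4 => (0 : Fin 3)) 0 = 4 := by decide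
    have e1 : occCount (fun _ : Fin 4 => (0 : Fin 3)) 1 = 0 := by decide
    have e2 : occCount (fun _ : Fin 4 => (0 : Fin 3)) 2 = 0 := by decide
    rw [Matrix.diagonal_apply_eq] at h0
    rw [e0, e1, e2, p400'] at h0
    norm_num [Nat.factorial] at h0
  · intro B hB
    rw [trace_diag', sum_pi4']
    simp only [tp_diag']
    have hE : Complex.exp (α * Complex.I) ≠ 0 := Complex.exp_ne_zero _
    have hconj : (starRingEnd ℂ) (Complex.exp (α * Complex.I)) =
        (Complex.exp (α * Complex.I))⁻¹ := by
      rw [← Complex.exp_conj, ← Complex.exp_neg]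
      congr 1
      simp [Complex.ext_iff]
    have key : ∀ n : ℕ, Complex.cos ((n : ℂ) * (α : ℂ)) =
        (Complex.exp (α * Complex.I) ^ n + ((Complex.exp (α * Complex.I))⁻¹) ^ n) / 2 := by
      intro n
      rw [Complex.cos, ← Complex.exp_neg, ← Complex.exp_nat_mul, ← Complex.exp_nat_mul]
      ring_nf
    have hcos1 : Complex.cos (α : ℂ) =
        (Complex.exp (α * Complex.I) + (Complex.exp (α * Complex.I))⁻¹) / 2 := by
      have := key 1; simpa using this
    have hcos3 : Complex.cos (3 * (α : ℂ)) =
        (Complex.exp (α * Complex.I) ^ 3 + ((Complex.exp (α * Complex.I))⁻¹) ^ 3) / 2 := by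
      have := key 3; push_cast at this; exact this
    have hcos4 : Complex.cos (4 * (α : ℂ)) =
        (Complex.exp (α * Complex.I) ^ 4 + ((Complex.exp (α * Complex.I))⁻¹) ^ 4) / 2 := by
      have := key 4; push_cast at this; exact this
    have hinv : (Complex.exp ((α : ℂ) * Complex.I))⁻¹ =
        Complex.exp (-((α : ℂ) * Complex.I)) := (Complex.exp_neg _).symm
    rcases hB 0 with h0 | h0 <;> rcases hB 1 with hb1 | hb1 <;>
      rcases hB 2 with hb2 | hb2 <;> rcases hB 3 with hb3 | hb3 <;>
      rw [h0, hb1, hb2, hb3] <;>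
      · simp (config := { decide := true }) only [Fin.sum_univ_three,
          Matrix.diagonal_apply_eq, Matrix.cons_val_zero, Matrix.cons_val_one,
          Matrix.head_cons, Matrix.cons_val_two, Matrix.tail_cons, occ4']
        norm_num [Nat.factorial]
        simp only [p400', p004', p040', p022', p220', p013', p310', p031', p130',
          p112', p211', p202', p103', p301', p121']
        push_cast
        simp only [hconj, hcos1, hcos3, hcos4, hinv]
        ring_nf
        all_goals try simp only [← Complex.exp_nat_mul, ← Complex.exp_add]
        all_goals try ring_nf
        all_goals try simp [Complex.exp_zero]
        all_goals try norm_num
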